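/- Let (x_n)_{n≥0} be a sequence taking values in a compact convex subset S of ℝ^K, (a_n)_{n≥0} a nonincreasing sequence of positive reals with 0 < liminf n·a_n ≤ limsup n·a_n < ∞, and (γ_n)_{n≥0} a sequence in ℝ^K with (1/n) Σ_{i=1}^n γ_i → 0. Let h: S → ℝ^K be continuous, and suppose x_{n+1} = x_n + a_n h(x_n) + a_n γ_n for all n ≥ 0. If the ODE ẋ = h(x) has a unique solution z: ℝ → S, then x_n → z(0) as n → ∞. -/

import Mathlib

open Filter
open scoped Topology

noncomputable section

namespace SAProof

/-- cumulative time scale -/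
def tau (a : ℕ → ℝ) (n : ℕ) : ℝ := ∑ i ∈ Finset.range n, a i

/-- index of the grid interval containing `r` -/
def idx (a : ℕ → ℝ) (r : ℝ) : ℕ := sInf {n | r < tau a n} - 1

variable {a : ℕ → ℝ}

theorem tau_succ (n : ℕ) : tau a (n + 1) = tau a n + a n :=
  Finset.sum_range_succ a n

theorem tau_zero : tau a 0 = 0 := rfl

theorem tau_mono (hpos : ∀ n, 0 < a n) : StrictMono (tau a) :=
  strictMono_nat_of_lt_succ fun n => by
    rw [tau_succ]; linarith [hpos n]

theorem tau_nonneg (hpos : ∀ n, 0 < a n) (n : ℕ) : 0 ≤ tau a n := by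
  cases n with
  | zero => simp [tau_zero]
  | succ k => exact le_of_lt ((tau_mono hpos).lt_iff_lt.mpr (Nat.succ_pos k) |>.trans_le' (le_of_eq tau_zero.symm))

theorem idx_set_nonempty (hdiv : Tendsto (tau a) atTop atTop) (r : ℝ) :
    {n | r < tau a n}.Nonempty := by
  obtain ⟨n, hn⟩ := (hdiv.eventually (eventually_gt_atTop r)).exists
  exact ⟨n, hn⟩

theorem idx_le (hpos : ∀ n, 0 < a n) (hdiv : Tendsto (tau a) atTop atTop)
    {r : ℝ} (hr : 0 ≤ r) : tau a (idx a r) ≤ r := by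
  have hmem := Nat.sInf_mem (idx_set_nonempty hdiv r)
  have h0 : (0 : ℕ) ∉ {n | r < tau a n} := by
    simp only [Set.mem_setOf_eq, tau_zero]; linarith
  have hne : sInf {n | r < tau a n} ≠ 0 := fun h => h0 (h ▸ hmem)
  have : sInf {n | r < tau a n} - 1 ∉ {n | r < tau a n} :=
    Nat.notMem_of_lt_sInf (Nat.sub_lt (Nat.pos_of_ne_zero hne) one_pos)
  simpa only [idx, Set.mem_setOf_eq, not_lt] using this

theorem idx_lt (hpos : ∀ n, 0 < a n) (hdiv : Tendsto (tau a) atTop atTop)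
    (r : ℝ) : r < tau a (idx a r + 1) := by
  have hmem := Nat.sInf_mem (idx_set_nonempty hdiv r)
  rcases Nat.eq_zero_or_pos (sInf {n | r < tau a n}) with h | h
  · have : r < tau a 0 := by simpa [h] using hmem
    have : r < 0 := by simpa [tau_zero] using this
    calc r < 0 := this
      _ < tau a (idx a r + 1) := (tau_mono hpos).lt_iff_lt.mpr (Nat.succ_pos _) |>.trans_le'
          (le_of_eq tau_zero.symm)
  · have : idx a r + 1 = sInf {n | r < tau a n} := Nat.succ_pred_eq_of_pos h
    rw [this]; exact hmem

theorem idx_mono (hdiv : Tendsto (tau a) atTop atTop) : Monotone (idx a) := by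
  intro r r' hrr'
  have hsub : sInf {n | r < tau a n} ≤ sInf {n | r' < tau a n} := by
    apply Nat.sInf_le
    have := Nat.sInf_mem (idx_set_nonempty hdiv r')
    exact lt_of_le_of_lt hrr' this
  exact Nat.sub_le_sub_right hsub 1

theorem idx_eq (hpos : ∀ n, 0 < a n) (hdiv : Tendsto (tau a) atTop atTop)
    {i : ℕ} {r : ℝ} (h1 : tau a i ≤ r) (h2 : r < tau a (i + 1)) : idx a r = i := by
  have hm : i + 1 ∈ {n | r < tau a n} := h2
  have hlow : ∀ n ∈ {n | r < tau a n}, i + 1 ≤ n := by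
    intro n hn
    by_contra hcon
    push_neg at hcon
    have : tau a n ≤ tau a i := (tau_mono hpos).monotone (Nat.lt_succ_iff.mp hcon)
    exact absurd (lt_of_le_of_lt h1 hn) (not_lt.mpr this)
  have : sInf {n | r < tau a n} = i + 1 :=
    le_antisymm (Nat.sInf_le hm) (hlow _ (Nat.sInf_mem ⟨_, hm⟩))
  simp [idx, this]

theorem idx_tau (hpos : ∀ n, 0 < a n) (hdiv : Tendsto (tau a) atTop atTop)
    (m : ℕ) : idx a (tau a m) = m :=
  idx_eq hpos hdiv le_rfl ((tau_mono hpos) (Nat.lt_succ_self m))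

theorem idx_tendsto (hpos : ∀ n, 0 < a n) (hdiv : Tendsto (tau a) atTop atTop) :
    Tendsto (idx a) atTop atTop := by
  rw [tendsto_atTop]
  intro C
  filter_upwards [eventually_ge_atTop (tau a C)] with r hr
  calc C = idx a (tau a C) := (idx_tau hpos hdiv C).symm
    _ ≤ idx a r := idx_mono hdiv hr

theorem idx_measurable (hdiv : Tendsto (tau a) atTop atTop) : Measurable (idx a) :=
  (idx_mono hdiv).measurable

end SAProof

end

open SAProof

set_option maxHeartbeats 2000000 in
/-- **Theorem (Stochastic approximation).**
Let `(x_n)` take values in a compact convex `S ⊆ ℝ^K`, let `(a_n)` be nonincreasing positive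
step sizes with `0 < liminf n·a_n ≤ limsup n·a_n < ∞`, and let the errors `(γ_n)` be Cesaro
negligible.  Let `h : S → ℝ^K` be continuous with `x_{n+1} = x_n + a_n h(x_n) + a_n γ_n`.
If the ODE `ẋ = h(x)` has a unique solution `z : ℝ → S`, then `x_n → z 0`. -/
theorem stochastic_approximation
    {K : ℕ} (S : Set (Fin K → ℝ)) (hScomp : IsCompact S) (hSconv : Convex ℝ S)
    (x : ℕ → Fin K → ℝ) (hxS : ∀ n, x n ∈ S)
    (a : ℕ → ℝ) (ha_pos : ∀ n, 0 < a n) (ha_anti : ∀ n, a (n+1) ≤ a n)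
    -- `0 < liminf n a_n ≤ limsup n a_n < ∞`
    (ha_bounds : ∃ b B : ℝ, 0 < b ∧ ∀ᶠ n : ℕ in atTop, b ≤ (n : ℝ) * a n ∧ (n : ℝ) * a n ≤ B)
    (γ : ℕ → Fin K → ℝ)
    (hγ : Tendsto (fun n : ℕ => (n : ℝ)⁻¹ • ∑ i ∈ Finset.Icc 1 n, γ i) atTop (𝓝 0))
    (h : (Fin K → ℝ) → Fin K → ℝ) (hcont : ContinuousOn h S)
    (hrec : ∀ n : ℕ, x (n+1) = x n + a n • h (x n) + a n • γ n)
    (z : ℝ → Fin K → ℝ)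
    (hz : (∀ t, z t ∈ S) ∧ ∀ t : ℝ, HasDerivAt z (h (z t)) t)
    (huniq : ∀ w : ℝ → Fin K → ℝ,
      ((∀ t, w t ∈ S) ∧ ∀ t : ℝ, HasDerivAt w (h (w t)) t) → w = z) :
    Tendsto x atTop (𝓝 (z 0)) := by
  classical
  -- Bounds from ha_bounds
  obtain ⟨b, B, hb, hbB⟩ := ha_bounds
  obtain ⟨NB, hNB⟩ := eventually_atTop.mp hbB
  have hB : 0 < B := by
    have := hNB (max NB 1) (le_max_left _ _)
    have h1 : (0:ℝ) < (max NB 1 : ℕ) := by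
      have : (1:ℕ) ≤ max NB 1 := le_max_right _ _
      exact_mod_cast Nat.lt_of_lt_of_le Nat.zero_lt_one this
    nlinarith [this.1, this.2, ha_pos (max NB 1)]
  -- bound on h over S
  obtain ⟨M₀, hM₀⟩ := hScomp.exists_bound_of_continuousOn hcont
  set M : ℝ := max M₀ 0 with hM_def
  have hM : ∀ y ∈ S, ‖h y‖ ≤ M := fun y hy => (hM₀ y hy).trans (le_max_left _ _)
  have hMnn : 0 ≤ M := le_max_right _ _
  -- Cesaro control of errors
  obtain ⟨G, hG_def⟩ : ∃ G : ℕ → Fin K → ℝ, ∀ n, G n = ∑ i ∈ Finset.Icc 1 n, γ i :=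
    ⟨_, fun _ => rfl⟩
  have hG : ∀ ε > 0, ∃ N, ∀ n, N ≤ n → ‖G n‖ ≤ ε * n := by
    intro ε hε
    have h1 : ∀ᶠ n : ℕ in atTop, ‖(n : ℝ)⁻¹ • G n‖ < ε := by
      have := NormedAddCommGroup.tendsto_nhds_zero.mp hγ ε hε
      filter_upwards [this] with n hn
      simpa [hG_def] using hn
    obtain ⟨N, hN⟩ := eventually_atTop.mp (h1.and (eventually_ge_atTop 1))
    refine ⟨N, fun n hn => ?_⟩
    obtain ⟨h2, h3⟩ := hN n hn
    have hnpos : (0:ℝ) < n := by exact_mod_cast h3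
    rw [norm_smul, norm_inv, Real.norm_natCast] at h2
    have h4 : (n:ℝ) * ((n:ℝ)⁻¹ * ‖G n‖) = ‖G n‖ := by field_simp
    nlinarith [h2, hnpos, h4]
  -- a tends to zero
  have ha_lim : Tendsto a atTop (𝓝 0) := by
    apply squeeze_zero' (Eventually.of_forall fun n => (ha_pos n).le)
      (g := fun n : ℕ => B / n) ?_ (tendsto_const_div_atTop_nhds_zero_nat B)
    filter_upwards [eventually_ge_atTop (max NB 1)] with n hn
    have h1 : NB ≤ n := le_trans (le_max_left _ _) hn
    have h2 : (1:ℕ) ≤ n := le_trans (le_max_right _ _) hn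
    have hnpos : (0:ℝ) < n := by exact_mod_cast h2
    rw [le_div_iff₀ hnpos]
    have := (hNB n h1).2
    linarith
  -- tau tends to infinity
  have htau_div : Tendsto (tau a) atTop atTop := by
    set N₁ : ℕ := max NB 1 with hN₁
    have hlow : ∀ n, N₁ ≤ n → b * (∑ i ∈ Finset.range n, (1:ℝ)/(i+1))
        - b * (∑ i ∈ Finset.range N₁, (1:ℝ)/(i+1)) ≤ tau a n := by
      intro n hn
      have e1 : b * (∑ i ∈ Finset.range n, (1:ℝ)/(i+1))
          - b * (∑ i ∈ Finset.range N₁, (1:ℝ)/(i+1))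
          = ∑ i ∈ Finset.Ico N₁ n, b * ((1:ℝ)/(i+1)) := by
        rw [Finset.sum_Ico_eq_sub _ hn, Finset.mul_sum, Finset.mul_sum]
      rw [e1]
      have e2 : (∑ i ∈ Finset.Ico N₁ n, a i) ≤ tau a n := by
        apply Finset.sum_le_sum_of_subset_of_nonneg
        · intro i hi; rw [Finset.mem_range]; exact (Finset.mem_Ico.mp hi).2
        · intro i _ _; exact (ha_pos i).le
      refine le_trans (Finset.sum_le_sum ?_) e2
      intro i hi
      obtain ⟨hi1, hi2⟩ := Finset.mem_Ico.mp hi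
      have hNBi : NB ≤ i := le_trans (le_max_left _ _) hi1
      have h1i : (1:ℕ) ≤ i := le_trans (le_max_right _ _) hi1
      have hipos : (0:ℝ) < i := by exact_mod_cast h1i
      have hb1 := (hNB i hNBi).1
      have hi1' : (0:ℝ) < (i:ℝ) + 1 := by positivity
      rw [mul_one_div, div_le_iff₀ hi1']
      have : b ≤ a i * i := by linarith [hb1]
      nlinarith [(ha_pos i).le]
    have hH : Tendsto (fun n : ℕ => b * (∑ i ∈ Finset.range n, (1:ℝ)/(i+1))
        - b * (∑ i ∈ Finset.range N₁, (1:ℝ)/(i+1))) atTop atTop := by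
      have h1 := Tendsto.const_mul_atTop hb Real.tendsto_sum_range_one_div_nat_succ_atTop
      have h2 := tendsto_atTop_add_const_right atTop
        (-(b * (∑ i ∈ Finset.range N₁, (1:ℝ)/(i+1)))) h1
      simpa [sub_eq_add_neg] using h2
    refine tendsto_atTop_mono' atTop ?_ hH
    filter_upwards [eventually_ge_atTop N₁] with n hn using hlow n hn
  -- telescoping identity
  have htel : ∀ j k, j ≤ k → x k - x j =
      (∑ i ∈ Finset.Ico j k, a i • h (x i)) + ∑ i ∈ Finset.Ico j k, a i • γ i := by
    intro j k hjk
    induction k, hjk using Nat.le_induction with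
    | base => simp
    | succ k hk ih =>
      rw [Finset.sum_Ico_succ_top hk, Finset.sum_Ico_succ_top hk, hrec k]
      have : x k + a k • h (x k) + a k • γ k - x j
          = (x k - x j) + a k • h (x k) + a k • γ k := by abel
      rw [this, ih]
      abel
  -- Abel summation identity
  have hGsucc : ∀ i, 1 ≤ i → G i = G (i-1) + γ i := by
    intro i hi
    obtain ⟨l, rfl⟩ : ∃ l, i = l + 1 := ⟨i - 1, by omega⟩
    rw [hG_def, hG_def, Finset.sum_Icc_succ_top (by omega)]
    simp
  have hAbel : ∀ j k, 1 ≤ j → j ≤ k →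
      ∑ i ∈ Finset.Ico j k, a i • γ i =
        (∑ i ∈ Finset.Ico j k, (a i - a (i+1)) • G i) + a k • G (k-1) - a j • G (j-1) := by
    intro j k hj hjk
    induction k, hjk using Nat.le_induction with
    | base => simp
    | succ k hk ih =>
      have h1k : 1 ≤ k := le_trans hj hk
      have hgk : γ k = G k - G (k-1) := by rw [hGsucc k h1k]; abel
      rw [Finset.sum_Ico_succ_top hk, Finset.sum_Ico_succ_top hk, ih, hgk]
      have hk1 : k + 1 - 1 = k := rfl
      rw [hk1, smul_sub, sub_smul]
      abel
  have hID2 : ∀ j k, j ≤ k →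
      ∑ i ∈ Finset.Ico j k, (a i - a (i+1)) * (i:ℝ) =
        (j:ℝ) * a j - (k:ℝ) * a k + ∑ i ∈ Finset.Ico j k, a (i+1) := by
    intro j k hjk
    induction k, hjk using Nat.le_induction with
    | base => simp
    | succ k hk ih =>
      rw [Finset.sum_Ico_succ_top hk, Finset.sum_Ico_succ_top hk, ih]
      push_cast
      ring
  -- window bound on noise
  have hNoise : ∀ ε > 0, ∃ N, ∀ j k, N ≤ j → j ≤ k →
      ‖∑ i ∈ Finset.Ico j k, a i • γ i‖ ≤ ε * (3*B + (tau a k - tau a j)) := by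
    intro ε hε
    obtain ⟨Nγ, hNγ⟩ := hG ε hε
    refine ⟨max Nγ NB + 1, fun j k hNj hjk => ?_⟩
    have hj1 : 1 ≤ j := by omega
    have hjγ : Nγ ≤ j - 1 := by omega
    have hkγ : Nγ ≤ k - 1 := by omega
    have hjNB : NB ≤ j := by omega
    have hkNB : NB ≤ k := by omega
    have htdiff : ∑ i ∈ Finset.Ico j k, a i = tau a k - tau a j := by
      rw [tau, tau, Finset.sum_Ico_eq_sub _ hjk]
    have htd0 : 0 ≤ tau a k - tau a j := by
      rw [← htdiff]; exact Finset.sum_nonneg fun i _ => (ha_pos i).le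
    rw [hAbel j k hj1 hjk]
    have step1 : ‖(∑ i ∈ Finset.Ico j k, (a i - a (i+1)) • G i) + a k • G (k-1) - a j • G (j-1)‖
        ≤ ‖∑ i ∈ Finset.Ico j k, (a i - a (i+1)) • G i‖ + ‖a k • G (k-1)‖ + ‖a j • G (j-1)‖ := by
      calc ‖(∑ i ∈ Finset.Ico j k, (a i - a (i+1)) • G i) + a k • G (k-1) - a j • G (j-1)‖
          ≤ ‖(∑ i ∈ Finset.Ico j k, (a i - a (i+1)) • G i) + a k • G (k-1)‖ + ‖a j • G (j-1)‖ :=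
            norm_sub_le _ _
        _ ≤ _ := by gcongr; exact norm_add_le _ _
    have bsum : ‖∑ i ∈ Finset.Ico j k, (a i - a (i+1)) • G i‖
        ≤ ε * (B + (tau a k - tau a j)) := by
      have b1 : ‖∑ i ∈ Finset.Ico j k, (a i - a (i+1)) • G i‖
          ≤ ∑ i ∈ Finset.Ico j k, (a i - a (i+1)) * (ε * i) := by
        refine le_trans (norm_sum_le _ _) (Finset.sum_le_sum fun i hi => ?_)
        obtain ⟨hi1, _⟩ := Finset.mem_Ico.mp hi
        rw [norm_smul, Real.norm_eq_abs, abs_of_nonneg (by linarith [ha_anti i])]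
        have := hNγ i (by omega)
        have hanti : 0 ≤ a i - a (i+1) := by linarith [ha_anti i]
        exact mul_le_mul_of_nonneg_left this hanti
      have b2 : ∑ i ∈ Finset.Ico j k, (a i - a (i+1)) * (ε * i)
          = ε * ∑ i ∈ Finset.Ico j k, (a i - a (i+1)) * (i:ℝ) := by
        rw [Finset.mul_sum]; congr 1; ext i; ring
      have b3 : ∑ i ∈ Finset.Ico j k, (a i - a (i+1)) * (i:ℝ) ≤ B + (tau a k - tau a j) := by
        rw [hID2 j k hjk]
        have c1 : (j:ℝ) * a j ≤ B := (hNB j hjNB).2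
        have c2 : 0 ≤ (k:ℝ) * a k := mul_nonneg (Nat.cast_nonneg k) (ha_pos k).le
        have c3 : ∑ i ∈ Finset.Ico j k, a (i+1) ≤ ∑ i ∈ Finset.Ico j k, a i :=
          Finset.sum_le_sum fun i _ => ha_anti i
        rw [htdiff] at c3
        linarith
      rw [b2] at b1
      refine le_trans b1 ?_
      exact mul_le_mul_of_nonneg_left b3 hε.le
    have bk : ‖a k • G (k-1)‖ ≤ ε * B := by
      rw [norm_smul, Real.norm_eq_abs, abs_of_nonneg (ha_pos k).le]
      have h1 := hNγ (k-1) hkγ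
      have h2 : ((k-1:ℕ):ℝ) ≤ (k:ℝ) := by exact_mod_cast Nat.sub_le k 1
      have h3 : (k:ℝ) * a k ≤ B := (hNB k hkNB).2
      calc a k * ‖G (k-1)‖ ≤ a k * (ε * ((k-1:ℕ):ℝ)) :=
            mul_le_mul_of_nonneg_left h1 (ha_pos k).le
        _ ≤ a k * (ε * (k:ℝ)) := by
            have := mul_le_mul_of_nonneg_left h2 hε.le
            exact mul_le_mul_of_nonneg_left this (ha_pos k).le
        _ = ε * ((k:ℝ) * a k) := by ring
        _ ≤ ε * B := mul_le_mul_of_nonneg_left h3 hε.le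
    have bj : ‖a j • G (j-1)‖ ≤ ε * B := by
      rw [norm_smul, Real.norm_eq_abs, abs_of_nonneg (ha_pos j).le]
      have h1 := hNγ (j-1) hjγ
      have h2 : ((j-1:ℕ):ℝ) ≤ (j:ℝ) := by exact_mod_cast Nat.sub_le j 1
      have h3 : (j:ℝ) * a j ≤ B := (hNB j hjNB).2
      calc a j * ‖G (j-1)‖ ≤ a j * (ε * ((j-1:ℕ):ℝ)) :=
            mul_le_mul_of_nonneg_left h1 (ha_pos j).le
        _ ≤ a j * (ε * (j:ℝ)) := by
            have := mul_le_mul_of_nonneg_left h2 hε.le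
            exact mul_le_mul_of_nonneg_left this (ha_pos j).le
        _ = ε * ((j:ℝ) * a j) := by ring
        _ ≤ ε * B := mul_le_mul_of_nonneg_left h3 hε.le
    calc ‖(∑ i ∈ Finset.Ico j k, (a i - a (i+1)) • G i) + a k • G (k-1) - a j • G (j-1)‖
        ≤ ‖∑ i ∈ Finset.Ico j k, (a i - a (i+1)) • G i‖ + ‖a k • G (k-1)‖ + ‖a j • G (j-1)‖ :=
          step1
      _ ≤ ε * (B + (tau a k - tau a j)) + ε * B + ε * B := by gcongr
      _ = ε * (3*B + (tau a k - tau a j)) := by ring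
  -- key estimate
  have hKE : ∀ ε > 0, ∃ N, ∀ j k, N ≤ j → j ≤ k →
      ‖x k - x j‖ ≤ M * (tau a k - tau a j) + ε * (3*B + (tau a k - tau a j)) := by
    intro ε hε
    obtain ⟨N, hN⟩ := hNoise ε hε
    refine ⟨N, fun j k hNj hjk => ?_⟩
    have htdiff : ∑ i ∈ Finset.Ico j k, a i = tau a k - tau a j := by
      rw [tau, tau, Finset.sum_Ico_eq_sub _ hjk]
    rw [htel j k hjk]
    have b1 : ‖∑ i ∈ Finset.Ico j k, a i • h (x i)‖ ≤ M * (tau a k - tau a j) := by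
      refine le_trans (norm_sum_le _ _) ?_
      have : ∀ i ∈ Finset.Ico j k, ‖a i • h (x i)‖ ≤ a i * M := fun i _ => by
        rw [norm_smul, Real.norm_eq_abs, abs_of_nonneg (ha_pos i).le]
        exact mul_le_mul_of_nonneg_left (hM _ (hxS i)) (ha_pos i).le
      refine le_trans (Finset.sum_le_sum this) ?_
      rw [← Finset.sum_mul, htdiff, mul_comm]
    calc ‖(∑ i ∈ Finset.Ico j k, a i • h (x i)) + ∑ i ∈ Finset.Ico j k, a i • γ i‖
        ≤ ‖∑ i ∈ Finset.Ico j k, a i • h (x i)‖ + ‖∑ i ∈ Finset.Ico j k, a i • γ i‖ :=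
          norm_add_le _ _
      _ ≤ M * (tau a k - tau a j) + ε * (3*B + (tau a k - tau a j)) := by
          gcongr
          exact hN j k hNj hjk
  -- it suffices to treat subsequences
  apply tendsto_of_subseq_tendsto
  intro ns hns
  -- extract a sub-subsequence converging pointwise at rational shifts
  obtain ⟨f₀, hf₀S, φ, hφ, hφconv⟩ :
      ∃ f₀ ∈ Set.univ.pi (fun _ : ℚ => S), ∃ φ : ℕ → ℕ, StrictMono φ ∧
        Tendsto ((fun k (q : ℚ) => x (idx a ((q:ℝ) + tau a (ns k)))) ∘ φ) atTop (𝓝 f₀) := by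
    apply IsCompact.tendsto_subseq (isCompact_univ_pi (fun _ : ℚ => hScomp))
    intro k
    simp only [Set.mem_univ_pi]
    intro q
    exact hxS _
  obtain ⟨mm, hmm_def⟩ : ∃ mm : ℕ → ℕ, ∀ j, mm j = ns (φ j) := ⟨_, fun _ => rfl⟩
  have hmm : Tendsto mm atTop atTop :=
    (hns.comp hφ.tendsto_atTop).congr fun j => (hmm_def j).symm
  obtain ⟨J, hJ_def⟩ : ∃ J : ℝ → ℕ → ℕ, ∀ t j, J t j = idx a (t + tau a (mm j)) :=
    ⟨_, fun _ _ => rfl⟩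
  -- basic facts about J
  have hσ : Tendsto (fun j => tau a (mm j)) atTop atTop := htau_div.comp hmm
  have hJtop : ∀ t : ℝ, Tendsto (fun j => J t j) atTop atTop := by
    intro t
    have := (idx_tendsto ha_pos htau_div).comp (tendsto_atTop_add_const_left atTop t hσ)
    exact this.congr fun j => (hJ_def t j).symm
  have hJmono : ∀ (s t : ℝ) (j : ℕ), s ≤ t → J s j ≤ J t j := by
    intro s t j hst
    rw [hJ_def, hJ_def]
    exact idx_mono htau_div (by linarith)
  have hJle : ∀ (s : ℝ), ∀ᶠ j in atTop, tau a (J s j) ≤ s + tau a (mm j) := by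
    intro s
    filter_upwards [hσ.eventually (eventually_ge_atTop (-s))] with j hj
    rw [hJ_def]
    exact idx_le ha_pos htau_div (by linarith)
  have hJgt : ∀ (s : ℝ) (j : ℕ), s + tau a (mm j) < tau a (J s j) + a (J s j) := by
    intro s j
    have := idx_lt ha_pos htau_div (s + tau a (mm j))
    rw [tau_succ] at this
    rw [hJ_def]
    exact this
  -- convergence at rational shifts
  have hq : ∀ q : ℚ, Tendsto (fun j => x (J (q:ℝ) j)) atTop (𝓝 (f₀ q)) := by
    intro q
    have := tendsto_pi_nhds.mp hφconv q
    refine this.congr fun j => ?_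
    simp only [Function.comp_apply]
    rw [hJ_def, hmm_def]
  -- the bridge estimate
  have hbridge : ∀ (s t : ℝ), s ≤ t → ∀ ε > 0,
      ∀ᶠ j in atTop, ‖x (J t j) - x (J s j)‖ ≤ M * (t - s) + ε := by
    intro s t hst ε hε
    have hts : 0 ≤ t - s := by linarith
    set δ : ℝ := min 1 (ε / (2*(M+1))) with hδdef
    have hδpos : 0 < δ := lt_min one_pos (by positivity)
    have hδ1 : δ ≤ 1 := min_le_left _ _
    have hδ2 : δ ≤ ε / (2*(M+1)) := min_le_right _ _
    set ε' : ℝ := min 1 (ε / (2*(3*B + (t-s) + 2))) with hε'def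
    have hden : 0 < 3*B + (t-s) + 2 := by linarith
    have hε'pos : 0 < ε' := lt_min one_pos (by positivity)
    have hε'1 : ε' ≤ 1 := min_le_left _ _
    have hε'2 : ε' ≤ ε / (2*(3*B + (t-s) + 2)) := min_le_right _ _
    obtain ⟨N, hN⟩ := hKE ε' hε'pos
    filter_upwards [hJle s, hJle t, (hJtop s).eventually (eventually_ge_atTop N),
      (ha_lim.comp (hJtop s)).eventually (eventually_lt_nhds hδpos)] with j h1 h2 h3 h4
    have hJm := hJmono s t j hst
    have hKEj := hN (J s j) (J t j) h3 hJm
    have hd0 : 0 ≤ tau a (J t j) - tau a (J s j) := by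
      have := (tau_mono ha_pos).monotone hJm
      linarith
    have hgt := hJgt s j
    have hdle : tau a (J t j) - tau a (J s j) ≤ t - s + δ := by
      have haj : a (J s j) < δ := h4
      linarith
    have hb1 : M * (tau a (J t j) - tau a (J s j)) ≤ M * (t - s + δ) :=
      mul_le_mul_of_nonneg_left hdle hMnn
    have hb2 : ε' * (3*B + (tau a (J t j) - tau a (J s j))) ≤ ε' * (3*B + (t - s + δ)) := by
      have : 3*B + (tau a (J t j) - tau a (J s j)) ≤ 3*B + (t - s + δ) := by linarith
      exact mul_le_mul_of_nonneg_left this hε'pos.le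
    have hMδ : M * δ ≤ ε / 2 := by
      have h5 : M * δ ≤ M * (ε / (2*(M+1))) := mul_le_mul_of_nonneg_left hδ2 hMnn
      have h6 : M * (ε / (2*(M+1))) ≤ ε / 2 := by
        rw [mul_comm, div_mul_eq_mul_div, div_le_div_iff₀ (by positivity) (by positivity)]
        nlinarith [hε.le, hMnn]
      linarith
    have hε'b : ε' * (3*B + (t - s + δ)) ≤ ε / 2 := by
      have h5 : 3*B + (t - s + δ) ≤ 3*B + (t-s) + 1 := by linarith
      have h6 : ε' * (3*B + (t - s + δ)) ≤ ε' * (3*B + (t-s) + 1) :=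
        mul_le_mul_of_nonneg_left h5 hε'pos.le
      have h7 : ε' * (3*B + (t-s) + 1) ≤ (ε / (2*(3*B + (t-s) + 2))) * (3*B + (t-s) + 1) := by
        apply mul_le_mul_of_nonneg_right hε'2
        linarith
      have h8 : (ε / (2*(3*B + (t-s) + 2))) * (3*B + (t-s) + 1) ≤ ε / 2 := by
        rw [div_mul_eq_mul_div, div_le_div_iff₀ (by positivity) (by positivity)]
        nlinarith [hε.le]
      linarith
    calc ‖x (J t j) - x (J s j)‖
        ≤ M * (tau a (J t j) - tau a (J s j)) + ε' * (3*B + (tau a (J t j) - tau a (J s j))) :=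
          hKEj
      _ ≤ M * (t - s + δ) + ε' * (3*B + (t - s + δ)) := by linarith
      _ = M * (t - s) + (M * δ + ε' * (3*B + (t - s + δ))) := by ring
      _ ≤ M * (t - s) + ε := by linarith
  -- convergence at all real shifts
  have hwex : ∀ t : ℝ, ∃ y, Tendsto (fun j => x (J t j)) atTop (𝓝 y) := by
    intro t
    have hc : CauchySeq (fun j => x (J t j)) := by
      rw [Metric.cauchySeq_iff]
      intro ε hε
      have hδpos : (0:ℝ) < ε / (8*(M+1)) := by positivity
      obtain ⟨q, hq1, hq2⟩ := exists_rat_btwn (lt_add_of_pos_right t hδpos)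
      have hqt : t ≤ (q:ℝ) := hq1.le
      have hbr := hbridge t (q:ℝ) hqt (ε/8) (by positivity)
      have hcq := (hq q).cauchySeq
      rw [Metric.cauchySeq_iff] at hcq
      obtain ⟨N1, hN1⟩ := hcq (ε/8) (by positivity)
      obtain ⟨N2, hN2⟩ := eventually_atTop.mp hbr
      refine ⟨max N1 N2, fun j hj l hl => ?_⟩
      have hj1 : N1 ≤ j := le_trans (le_max_left _ _) hj
      have hj2 : N2 ≤ j := le_trans (le_max_right _ _) hj
      have hl1 : N1 ≤ l := le_trans (le_max_left _ _) hl
      have hl2 : N2 ≤ l := le_trans (le_max_right _ _) hl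
      have hMq : M * ((q:ℝ) - t) ≤ ε/8 := by
        have hM1 : M * ((q:ℝ) - t) ≤ M * (ε/(8*(M+1))) :=
          mul_le_mul_of_nonneg_left (by linarith) hMnn
        have hM2 : M * (ε/(8*(M+1))) ≤ ε/8 := by
          rw [mul_comm, div_mul_eq_mul_div, div_le_div_iff₀ (by positivity) (by positivity)]
          nlinarith [hε.le, hMnn]
        linarith
      have e1 : dist (x (J t j)) (x (J (q:ℝ) j)) ≤ ε/4 := by
        rw [dist_eq_norm, norm_sub_rev]
        have := hN2 j hj2
        linarith
      have e1' : dist (x (J (q:ℝ) l)) (x (J t l)) ≤ ε/4 := by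
        rw [dist_eq_norm]
        have := hN2 l hl2
        linarith
      have e2 : dist (x (J (q:ℝ) j)) (x (J (q:ℝ) l)) < ε/8 := hN1 j hj1 l hl1
      calc dist (x (J t j)) (x (J t l))
          ≤ dist (x (J t j)) (x (J (q:ℝ) j)) + dist (x (J (q:ℝ) j)) (x (J (q:ℝ) l))
            + dist (x (J (q:ℝ) l)) (x (J t l)) := dist_triangle4 _ _ _ _
        _ < ε := by linarith
    exact cauchySeq_tendsto_of_complete hc
  choose w hw using hwex
  have hwS : ∀ t, w t ∈ S := fun t =>
    hScomp.isClosed.mem_of_tendsto (hw t) (Eventually.of_forall fun j => hxS _)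
  -- w is Lipschitz
  have hLip : ∀ s t : ℝ, s ≤ t → ‖w t - w s‖ ≤ M * (t - s) := by
    intro s t hst
    refine le_of_forall_pos_le_add fun ε hε => ?_
    have hn : Tendsto (fun j => ‖x (J t j) - x (J s j)‖) atTop (𝓝 ‖w t - w s‖) :=
      ((hw t).sub (hw s)).norm
    exact le_of_tendsto hn (hbridge s t hst ε hε)
  have hwcont : Continuous w := by
    have hlw : LipschitzWith (Real.toNNReal M) w := by
      apply LipschitzWith.of_dist_le_mul
      intro s t
      rw [Real.coe_toNNReal M hMnn, dist_eq_norm]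
      rcases le_total s t with hst | hts
      · rw [norm_sub_rev]
        calc ‖w t - w s‖ ≤ M * (t - s) := hLip s t hst
          _ = M * dist s t := by rw [Real.dist_eq, abs_of_nonpos (by linarith : s - t ≤ 0)]; ring
      · calc ‖w s - w t‖ ≤ M * (s - t) := hLip t s hts
          _ = M * dist s t := by rw [Real.dist_eq, abs_of_nonneg (by linarith : (0:ℝ) ≤ s - t)]
    exact hlw.continuous
  have hhw : Continuous (fun u => h (w u)) :=
    hcont.comp_continuous hwcont hwS
  -- integral identity
  have hODE : ∀ s t : ℝ, s ≤ t → w t - w s = ∫ u in s..t, h (w u) := by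
    obtain ⟨g, hg_def⟩ : ∃ g : ℝ → Fin K → ℝ, ∀ u, g u = h (x (idx a u)) := ⟨_, fun _ => rfl⟩
    have hgmeas : Measurable g := by
      have hge : g = (fun i => h (x i)) ∘ (idx a) := funext fun u => hg_def u
      rw [hge]
      exact measurable_from_top.comp (idx_measurable htau_div)
    have hgbd : ∀ u, ‖g u‖ ≤ M := fun u => by rw [hg_def]; exact hM _ (hxS _)
    have hfmeas : ∀ c : ℝ, Measurable (fun u => g (u + c)) := fun c =>
      hgmeas.comp (measurable_add_const c)
    have hfint : ∀ (c α β : ℝ),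
        IntervalIntegrable (fun u => g (u + c)) MeasureTheory.volume α β := by
      intro c α β
      refine IntervalIntegrable.mono_fun (intervalIntegrable_const (c := M))
        ((hfmeas c).aestronglyMeasurable.restrict) ?_
      refine MeasureTheory.ae_of_all _ fun u => ?_
      show ‖g (u + c)‖ ≤ ‖(M:ℝ)‖
      rw [Real.norm_eq_abs, abs_of_nonneg hMnn]
      exact hgbd _
    have hgint : ∀ α β : ℝ, IntervalIntegrable g MeasureTheory.volume α β := by
      intro α β
      simpa using hfint 0 α β
    have hstep : ∀ i : ℕ, (∫ u in (tau a i)..(tau a (i+1)), g u) = a i • h (x i) := by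
      intro i
      have hlt : tau a i < tau a (i+1) := tau_mono ha_pos (Nat.lt_succ_self i)
      have hcongr : (∫ u in (tau a i)..(tau a (i+1)), g u)
          = ∫ _u in (tau a i)..(tau a (i+1)), h (x i) := by
        apply intervalIntegral.integral_congr_ae
        have h1 : {(tau a (i+1))}ᶜ ∈ MeasureTheory.ae MeasureTheory.volume :=
          MeasureTheory.compl_mem_ae_iff.mpr (MeasureTheory.measure_singleton _)
        filter_upwards [h1] with u hu hmem
        rw [Set.uIoc_of_le hlt.le] at hmem
        have hune : u ≠ tau a (i+1) := hu
        have h2 : tau a i ≤ u := hmem.1.le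
        have h3 : u < tau a (i+1) := lt_of_le_of_ne hmem.2 hune
        rw [hg_def, idx_eq ha_pos htau_div h2 h3]
      rw [hcongr, intervalIntegral.integral_const, tau_succ]
      congr 1
      ring
    have hsum : ∀ j1 j2, j1 ≤ j2 → (∫ u in (tau a j1)..(tau a j2), g u)
        = ∑ i ∈ Finset.Ico j1 j2, a i • h (x i) := by
      intro j1 j2 hj
      induction j2, hj using Nat.le_induction with
      | base => simp
      | succ j2 hj2 ih =>
        rw [Finset.sum_Ico_succ_top hj2, ← ih, ← hstep j2]
        exact (intervalIntegral.integral_add_adjacent_intervals (hgint _ _) (hgint _ _)).symm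
    intro s t hst
    have hdecomp : ∀ j : ℕ, x (J t j) - x (J s j)
        = (∫ u in (tau a (J s j) - tau a (mm j))..s, g (u + tau a (mm j)))
          + (∫ u in s..t, g (u + tau a (mm j)))
          + (∫ u in t..(tau a (J t j) - tau a (mm j)), g (u + tau a (mm j)))
          + ∑ i ∈ Finset.Ico (J s j) (J t j), a i • γ i := by
      intro j
      have hJm := hJmono s t j hst
      rw [htel _ _ hJm]
      congr 1
      have e1 : (∫ u in (tau a (J s j) - tau a (mm j))..(tau a (J t j) - tau a (mm j)),
            g (u + tau a (mm j)))
          = ∫ u in (tau a (J s j))..(tau a (J t j)), g u := by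
        rw [intervalIntegral.integral_comp_add_right g (tau a (mm j)), sub_add_cancel,
          sub_add_cancel]
      have e2 := intervalIntegral.integral_add_adjacent_intervals
        (hfint (tau a (mm j)) (tau a (J s j) - tau a (mm j)) s)
        (hfint (tau a (mm j)) s t)
      have e3 := intervalIntegral.integral_add_adjacent_intervals
        (hfint (tau a (mm j)) (tau a (J s j) - tau a (mm j)) t)
        (hfint (tau a (mm j)) t (tau a (J t j) - tau a (mm j)))
      rw [e2, e3, e1, hsum _ _ hJm]
    have hE1 : Tendsto (fun j => ∫ u in (tau a (J s j) - tau a (mm j))..s,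
        g (u + tau a (mm j))) atTop (𝓝 0) := by
      apply squeeze_zero_norm' (a := fun j => M * a (J s j))
      · filter_upwards [hJle s] with j h1
        have h2 := hJgt s j
        have hbound : ∀ u ∈ Set.uIoc (tau a (J s j) - tau a (mm j)) s,
            ‖g (u + tau a (mm j))‖ ≤ M := fun u _ => hgbd _
        refine le_trans (intervalIntegral.norm_integral_le_of_norm_le_const hbound) ?_
        have habs : |s - (tau a (J s j) - tau a (mm j))| ≤ a (J s j) := by
          rw [abs_of_nonneg (by linarith)]
          linarith
        exact mul_le_mul_of_nonneg_left habs hMnn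
      · have := ha_lim.comp (hJtop s)
        simpa using this.const_mul M
    have hE2 : Tendsto (fun j => ∫ u in t..(tau a (J t j) - tau a (mm j)),
        g (u + tau a (mm j))) atTop (𝓝 0) := by
      apply squeeze_zero_norm' (a := fun j => M * a (J t j))
      · filter_upwards [hJle t] with j h1
        have h2 := hJgt t j
        have hbound : ∀ u ∈ Set.uIoc t (tau a (J t j) - tau a (mm j)),
            ‖g (u + tau a (mm j))‖ ≤ M := fun u _ => hgbd _
        refine le_trans (intervalIntegral.norm_integral_le_of_norm_le_const hbound) ?_
        have habs : |tau a (J t j) - tau a (mm j) - t| ≤ a (J t j) := by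
          rw [abs_of_nonpos (by linarith)]
          linarith
        exact mul_le_mul_of_nonneg_left habs hMnn
      · have := ha_lim.comp (hJtop t)
        simpa using this.const_mul M
    have hA : Tendsto (fun j => ∫ u in s..t, g (u + tau a (mm j))) atTop
        (𝓝 (∫ u in s..t, h (w u))) := by
      apply intervalIntegral.tendsto_integral_filter_of_dominated_convergence
        (bound := fun _ => M)
      · exact Eventually.of_forall fun j => ((hfmeas _).aestronglyMeasurable).restrict
      · exact Eventually.of_forall fun j => MeasureTheory.ae_of_all _ fun u _ => hgbd _
      · exact intervalIntegrable_const
      · refine MeasureTheory.ae_of_all _ fun u _ => ?_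
        have h1 : Tendsto (fun j => x (J u j)) atTop (𝓝[S] (w u)) :=
          tendsto_nhdsWithin_of_tendsto_nhds_of_eventually_within _ (hw u)
            (Eventually.of_forall fun j => hxS _)
        have h2 : ContinuousWithinAt h S (w u) := hcont (w u) (hwS u)
        have h3 := h2.tendsto.comp h1
        refine h3.congr fun j => ?_
        simp only [Function.comp_apply]
        rw [hJ_def, hg_def]
    have hnoise0 : Tendsto (fun j => ∑ i ∈ Finset.Ico (J s j) (J t j), a i • γ i)
        atTop (𝓝 0) := by
      rw [NormedAddCommGroup.tendsto_nhds_zero]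
      intro ε hε
      have hts : 0 ≤ t - s := by linarith
      have hden : (0:ℝ) < 3*B + (t-s) + 2 := by linarith
      have hε''pos : 0 < ε / (2*(3*B + (t-s) + 2)) := by positivity
      obtain ⟨N, hN⟩ := hNoise _ hε''pos
      filter_upwards [hJle t, (hJtop s).eventually (eventually_ge_atTop N),
        (ha_lim.comp (hJtop s)).eventually (eventually_lt_nhds one_pos)] with j h1 h2 h3
      have hJm := hJmono s t j hst
      have hgt := hJgt s j
      have hd : tau a (J t j) - tau a (J s j) ≤ t - s + 1 := by
        have haj : a (J s j) < 1 := h3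
        linarith
      have hbd := hN _ _ h2 hJm
      have hfin : (ε / (2*(3*B + (t-s) + 2))) * (3*B + (tau a (J t j) - tau a (J s j)))
          ≤ ε / 2 := by
        have c1 : (ε / (2*(3*B + (t-s) + 2))) * (3*B + (tau a (J t j) - tau a (J s j)))
            ≤ (ε / (2*(3*B + (t-s) + 2))) * (3*B + (t-s) + 1) := by
          apply mul_le_mul_of_nonneg_left (by linarith) hε''pos.le
        have c2 : (ε / (2*(3*B + (t-s) + 2))) * (3*B + (t-s) + 1) ≤ ε / 2 := by
          rw [div_mul_eq_mul_div, div_le_div_iff₀ (by positivity) (by positivity)]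
          nlinarith [hε.le]
        linarith
      calc ‖∑ i ∈ Finset.Ico (J s j) (J t j), a i • γ i‖
          ≤ (ε / (2*(3*B + (t-s) + 2))) * (3*B + (tau a (J t j) - tau a (J s j))) := hbd
        _ ≤ ε / 2 := hfin
        _ < ε := by linarith
    have hlhs : Tendsto (fun j => x (J t j) - x (J s j)) atTop (𝓝 (w t - w s)) :=
      (hw t).sub (hw s)
    have hrhs : Tendsto (fun j => x (J t j) - x (J s j)) atTop
        (𝓝 (0 + (∫ u in s..t, h (w u)) + 0 + 0)) := by
      have := ((hE1.add hA).add hE2).add hnoise0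
      exact this.congr fun j => (hdecomp j).symm
    have := tendsto_nhds_unique hlhs hrhs
    rw [this]
    simp
  -- w is a solution
  have hwderiv : ∀ t : ℝ, HasDerivAt w (h (w t)) t := by
    have hrep : ∀ t : ℝ, w t = w 0 + ∫ u in (0:ℝ)..t, h (w u) := by
      intro t
      rcases le_total 0 t with h0t | ht0
      · have h1 := hODE 0 t h0t
        rw [← h1]; abel
      · have h1 := hODE t 0 ht0
        have h2 : (∫ u in (0:ℝ)..t, h (w u)) = - ∫ u in t..(0:ℝ), h (w u) :=
          intervalIntegral.integral_symm t 0
        rw [h2, ← h1]; abel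
    intro t
    have hint : IntervalIntegrable (fun u => h (w u)) MeasureTheory.volume 0 t :=
      hhw.intervalIntegrable 0 t
    have hd := (intervalIntegral.integral_hasDerivAt_right hint
      (hhw.stronglyMeasurableAtFilter _ _) hhw.continuousAt).const_add (w 0)
    exact hd.congr_of_eventuallyEq (Eventually.of_forall fun r => hrep r)
  have hwz : w = z := huniq w ⟨hwS, hwderiv⟩
  -- conclude
  refine ⟨φ, ?_⟩
  have h0 : ∀ j, x (ns (φ j)) = x (J 0 j) := by
    intro j
    rw [hJ_def, zero_add, idx_tau ha_pos htau_div, hmm_def]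
  have : Tendsto (fun j => x (J 0 j)) atTop (𝓝 (z 0)) := by
    rw [← hwz]; exact hw 0
  exact this.congr fun j => (h0 j).symm
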